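/- Let m ≥ 0 and let α_1, …, α_m be complex numbers of modulus 1. If the sequence n ↦ α_1^n + ⋯ + α_m^n converges as n → ∞, then α_i = 1 for every i, and in particular the limit equals m. -/

import Mathlib

open Filter Finset Complex

lemma cesaro_pow {z : ℂ} (hz : ‖z‖ = 1) :
    Filter.Tendsto (fun n : ℕ => (n⁻¹ : ℝ) • ∑ k ∈ Finset.range n, z ^ k) Filter.atTop
      (nhds (if z = 1 then 1 else 0)) := by
  by_cases h1 : z = 1
  · rw [if_pos h1]
    apply Tendsto.congr' _ (tendsto_const_nhds : Tendsto (fun _ : ℕ => (1:ℂ)) atTop (nhds 1))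
    filter_upwards [eventually_gt_atTop 0] with n hn
    have hne : ((n:ℝ)) ≠ 0 := by positivity
    simp [h1, Complex.real_smul, hne, Complex.ofReal_ne_zero.mpr hne]
    exact (inv_mul_cancel₀ (show ((n:ℂ)) ≠ 0 from Nat.cast_ne_zero.mpr hn.ne')).symm
  · rw [if_neg h1]
    apply squeeze_zero_norm (a := fun n : ℕ => (2 / ‖z - 1‖) * ((n:ℝ))⁻¹) (f := fun n : ℕ => (n⁻¹ : ℝ) • ∑ k ∈ Finset.range n, z ^ k)
    · intro n
      rw [norm_smul]
      have hsum : ∑ k ∈ Finset.range n, z ^ k = (z ^ n - 1) / (z - 1) := geom_sum_eq h1 n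
      have hzne : z - 1 ≠ 0 := sub_ne_zero.mpr h1
      have hbound : ‖∑ k ∈ Finset.range n, z ^ k‖ ≤ 2 / ‖z - 1‖ := by
        rw [hsum, norm_div]
        have hnum : ‖z ^ n - 1‖ ≤ 2 := by
          have h := norm_sub_le (z ^ n) (1 : ℂ)
          simp only [map_pow, hz, one_pow, map_one, norm_pow, norm_one] at h
          linarith
        gcongr
      calc ‖(n⁻¹:ℝ)‖ * ‖∑ k ∈ Finset.range n, z ^ k‖
          ≤ (n:ℝ)⁻¹ * (2 / ‖z - 1‖) := by
            apply mul_le_mul _ hbound (norm_nonneg _) (by positivity)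
            simp
        _ = (2 / ‖z - 1‖) * (n:ℝ)⁻¹ := mul_comm _ _
    · have := tendsto_inv_atTop_nhds_zero_nat.const_mul (2 / ‖z - 1‖)
      simpa using this

theorem stmt_8 (m : ℕ) (α : Fin m → ℂ) (hα : ∀ i, ‖α i‖ = 1) (L : ℂ)
    (hconv : Filter.Tendsto (fun n : ℕ => ∑ i, α i ^ n) Filter.atTop (nhds L)) :
    (∀ i, α i = 1) ∧ L = m := by
  classical
  set B : Finset (Fin m) := Finset.univ.filter (fun i => α i ≠ 1) with hBdef
  set C : Finset (Fin m) := Finset.univ.filter (fun i => α i = 1) with hCdef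
  have hsplit : ∀ n : ℕ, (∑ i, α i ^ n) = (C.card : ℂ) + ∑ i ∈ B, α i ^ n := by
    intro n
    rw [← Finset.sum_filter_add_sum_filter_not Finset.univ (fun i => α i = 1)]
    congr 1
    · rw [Finset.sum_congr rfl (fun i hi => by
        rw [(Finset.mem_filter.mp hi).2, one_pow])]
      simp
      rw [hCdef]
  set T : ℕ → ℂ := fun n => ∑ i ∈ B, α i ^ n with hTdef
  have hT : Filter.Tendsto T Filter.atTop (nhds (L - C.card)) := by
    have : T = fun n => (∑ i, α i ^ n) - (C.card : ℂ) := by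
      funext n; rw [hsplit n]; ring
    rw [this]
    exact hconv.sub_const _
  -- Cesàro of T
  have hces1 : Filter.Tendsto (fun n : ℕ => (n⁻¹ : ℝ) • ∑ k ∈ Finset.range n, T k)
      Filter.atTop (nhds (L - C.card)) := hT.cesaro_smul
  have hces2 : Filter.Tendsto (fun n : ℕ => (n⁻¹ : ℝ) • ∑ k ∈ Finset.range n, T k)
      Filter.atTop (nhds 0) := by
    have heq : (fun n : ℕ => (n⁻¹ : ℝ) • ∑ k ∈ Finset.range n, T k)
        = fun n : ℕ => ∑ i ∈ B, (n⁻¹ : ℝ) • ∑ k ∈ Finset.range n, α i ^ k := by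
      funext n
      rw [hTdef]
      rw [Finset.sum_comm, Finset.smul_sum]
    rw [heq]
    have h0 : (0 : ℂ) = ∑ _i ∈ B, (0 : ℂ) := by simp
    rw [h0]
    apply tendsto_finset_sum
    intro i hi
    have hne : α i ≠ 1 := (Finset.mem_filter.mp hi).2
    have := cesaro_pow (hα i)
    rwa [if_neg hne] at this
  have hLC : L = (C.card : ℂ) := by
    have := tendsto_nhds_unique hces1 hces2
    linear_combination this
  have hT0 : Filter.Tendsto T Filter.atTop (nhds 0) := by
    rw [hLC] at hT; simpa using hT
  -- Now |T|² argument
  have hG : Filter.Tendsto (fun n => T n * (starRingEnd ℂ) (T n)) Filter.atTop (nhds 0) := by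
    have := hT0.mul ((Complex.continuous_conj.tendsto 0).comp hT0)
    simpa using this
  have hces3 : Filter.Tendsto
      (fun n : ℕ => (n⁻¹ : ℝ) • ∑ k ∈ Finset.range n, T k * (starRingEnd ℂ) (T k))
      Filter.atTop (nhds 0) := hG.cesaro_smul
  have hexpand : ∀ k : ℕ, T k * (starRingEnd ℂ) (T k)
      = ∑ i ∈ B, ∑ j ∈ B, (α i * (starRingEnd ℂ) (α j)) ^ k := by
    intro k
    rw [hTdef]
    rw [map_sum, Finset.sum_mul_sum]
    congr 1; funext i; congr 1; funext j
    rw [map_pow, mul_pow]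
  have hces4 : Filter.Tendsto
      (fun n : ℕ => (n⁻¹ : ℝ) • ∑ k ∈ Finset.range n, T k * (starRingEnd ℂ) (T k))
      Filter.atTop
      (nhds (∑ i ∈ B, ∑ j ∈ B, if α i * (starRingEnd ℂ) (α j) = 1 then (1:ℂ) else 0)) := by
    have heq : (fun n : ℕ => (n⁻¹ : ℝ) • ∑ k ∈ Finset.range n, T k * (starRingEnd ℂ) (T k))
        = fun n : ℕ => ∑ i ∈ B, ∑ j ∈ B,
            (n⁻¹ : ℝ) • ∑ k ∈ Finset.range n, (α i * (starRingEnd ℂ) (α j)) ^ k := by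
      funext n
      have hkey : (∑ k ∈ Finset.range n, T k * (starRingEnd ℂ) (T k))
          = ∑ i ∈ B, ∑ j ∈ B, ∑ k ∈ Finset.range n, (α i * (starRingEnd ℂ) (α j)) ^ k := by
        simp only [hexpand]
        rw [Finset.sum_comm]
        exact Finset.sum_congr rfl fun i _ => Finset.sum_comm
      rw [hkey, Finset.smul_sum]
      exact Finset.sum_congr rfl fun i _ => Finset.smul_sum
    rw [heq]
    apply tendsto_finset_sum
    intro i _
    apply tendsto_finset_sum
    intro j _
    apply cesaro_pow
    rw [norm_mul, hα i, Complex.norm_conj, hα j, mul_one]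
  have hV : (∑ i ∈ B, ∑ j ∈ B, if α i * (starRingEnd ℂ) (α j) = 1 then (1:ℂ) else 0) = 0 :=
    tendsto_nhds_unique hces4 hces3
  have hBempty : B = ∅ := by
    by_contra hne
    obtain ⟨i0, hi0⟩ := Finset.nonempty_iff_ne_empty.mpr hne
    have hdiag : ∀ i ∈ B, (α i * (starRingEnd ℂ) (α i)) = 1 := by
      intro i _
      rw [Complex.mul_conj]
      norm_cast
      rw [← Complex.sq_norm, hα i]
      norm_num
    have hreal : (∑ i ∈ B, ∑ j ∈ B, if α i * (starRingEnd ℂ) (α j) = 1 then (1:ℂ) else 0)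
        = ∑ i ∈ B, ((1:ℂ) + ∑ j ∈ B.erase i, if α i * (starRingEnd ℂ) (α j) = 1 then (1:ℂ) else 0) := by
      apply Finset.sum_congr rfl
      intro i hi
      rw [← Finset.add_sum_erase _ _ hi, if_pos (hdiag i hi)]
    -- each inner term has real part ≥ 1 ... instead: take real parts
    have hre : (0:ℝ) = ((∑ i ∈ B, ∑ j ∈ B, if α i * (starRingEnd ℂ) (α j) = 1 then (1:ℂ) else 0)).re := by
      rw [hV]; simp
    rw [hreal] at hre
    simp only [Complex.re_sum, Complex.add_re, Complex.one_re] at hre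
    have hpos : ∀ i ∈ B, (0:ℝ) < 1 + ∑ j ∈ B.erase i, (if α i * (starRingEnd ℂ) (α j) = 1 then (1:ℂ) else 0).re := by
      intro i _
      have : (0:ℝ) ≤ ∑ j ∈ B.erase i, (if α i * (starRingEnd ℂ) (α j) = 1 then (1:ℂ) else 0).re := by
        apply Finset.sum_nonneg
        intro j _
        split <;> simp
      linarith
    have hlt : (0:ℝ) < ∑ i ∈ B, (1 + ∑ j ∈ B.erase i, (if α i * (starRingEnd ℂ) (α j) = 1 then (1:ℂ) else 0).re) :=
      Finset.sum_pos hpos ⟨i0, hi0⟩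
    linarith [hre, hlt]
  have hall : ∀ i, α i = 1 := by
    intro i
    by_contra h
    have : i ∈ B := Finset.mem_filter.mpr ⟨Finset.mem_univ i, h⟩
    rw [hBempty] at this
    exact absurd this (Finset.notMem_empty i)
  refine ⟨hall, ?_⟩
  have hCcard : C = Finset.univ := by
    apply Finset.eq_univ_of_forall
    intro i
    exact Finset.mem_filter.mpr ⟨Finset.mem_univ i, hall i⟩
  rw [hLC, hCcard]
  simp
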